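/- There exists a Hausdorff paratopological group G such that every singleton of G is a Gδ-set, but G is not submetrizable. -/

import Mathlib

open Topology Classical

namespace NSGW

/-- An almost disjoint family of infinite subsets of `ℕ`. -/
def ADF (C : Set (Set ℕ)) : Prop :=
  (∀ A ∈ C, A.Infinite) ∧ C.Pairwise fun A B => (A ∩ B).Finite

lemma adf_sUnion_chain {c : Set (Set (Set ℕ))} (hc : ∀ C ∈ c, ADF C)
    (hchain : IsChain (fun x1 x2 => x1 ⊆ x2) c) : ADF (⋃₀ c) := by
  constructor
  · rintro A ⟨C, hC, hA⟩
    exact (hc C hC).1 A hA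
  · rintro A ⟨C, hC, hA⟩ B ⟨C', hC', hB⟩ hne
    rcases hchain.total hC hC' with h | h
    · exact (hc C' hC').2 (h hA) hB hne
    · exact (hc C hC).2 hA (h hB) hne

/-- The basic disjoint family: columns of the pairing function. -/
noncomputable def fam (i : ℕ) : Set ℕ := Set.range (Nat.pair i)

lemma fam_infinite (i : ℕ) : (fam i).Infinite :=
  Set.infinite_range_of_injective (fun a b h => (Nat.pair_eq_pair.1 h).2)

lemma fam_disj {i j : ℕ} (h : i ≠ j) : fam i ∩ fam j = ∅ := by
  ext x
  simp only [fam, Set.mem_inter_iff, Set.mem_range, Set.mem_empty_iff_false, iff_false]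
  rintro ⟨⟨a, rfl⟩, ⟨b, hb⟩⟩
  exact h (Nat.pair_eq_pair.1 hb.symm).1

lemma fam_injective : Function.Injective fam := by
  intro i j hij
  by_contra hne
  have h0 : Nat.pair i 0 ∈ fam i := ⟨0, rfl⟩
  have : Nat.pair i 0 ∈ fam i ∩ fam j := ⟨h0, hij ▸ h0⟩
  rw [fam_disj hne] at this
  exact this

lemma adf_fam : ADF (Set.range fam) := by
  constructor
  · rintro A ⟨i, rfl⟩; exact fam_infinite i
  · rintro A ⟨i, rfl⟩ B ⟨j, rfl⟩ hne
    have hij : i ≠ j := fun h => hne (h ▸ rfl)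
    rw [fam_disj hij]; exact Set.finite_empty

/-- Existence of an uncountable MAD family on ℕ. -/
theorem exists_mad : ∃ C : Set (Set ℕ), ADF C ∧
    (∀ D : Set ℕ, D.Infinite → ∃ A ∈ C, (A ∩ D).Infinite) ∧ ¬ C.Countable := by
  obtain ⟨M, hsub, hM⟩ := zorn_subset_nonempty {C | ADF C}
    (fun c hc hchain _ => ⟨⋃₀ c, adf_sUnion_chain (fun C hC => hc hC) hchain,
      fun s hs => Set.subset_sUnion_of_mem hs⟩) (Set.range fam) adf_fam
  have hMAD : ADF M := hM.1
  -- maximality gives the catching property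
  have hcatch : ∀ D : Set ℕ, D.Infinite → ∃ A ∈ M, (A ∩ D).Infinite := by
    intro D hD
    by_contra hno
    push_neg at hno
    have hDM : D ∉ M := by
      intro hDM
      have := hno D hDM
      rw [Set.inter_self] at this
      exact hD this
    have hins : ADF (insert D M) := by
      constructor
      · rintro A (rfl | hA)
        · exact hD
        · exact hMAD.1 A hA
      · rw [@Set.pairwise_insert_of_symm _ _ _ _ ?_]
        · refine ⟨hMAD.2, fun B hB _ => ?_⟩
          rw [Set.inter_comm]
          exact hno B hB
        · refine ⟨fun A B h => ?_⟩
          rwa [Set.inter_comm]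
    have : insert D M ⊆ M := hM.2 hins (Set.subset_insert D M)
    exact hDM (this (Set.mem_insert D M))
  refine ⟨M, hMAD, hcatch, ?_⟩
  -- uncountability
  intro hcnt
  have hMinf : M.Infinite :=
    Set.infinite_of_injective_forall_mem fam_injective (fun i => hsub ⟨i, rfl⟩)
  have : Countable ↥M := Set.countable_coe_iff.2 hcnt
  have : Infinite ↥M := Set.infinite_coe_iff.2 hMinf
  obtain ⟨den⟩ := nonempty_denumerable_iff.2 ⟨‹Countable ↥M›, ‹Infinite ↥M›⟩
  letI := den
  let e : ℕ ≃ ↥M := (Denumerable.eqv ↥M).symm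
  let f : ℕ → Set ℕ := fun n => (e n).1
  have hfinj : Function.Injective f := by
    intro a b hab
    exact e.injective (Subtype.ext hab)
  have hfmem : ∀ n, f n ∈ M := fun n => (e n).2
  have hfsurj : ∀ A ∈ M, ∃ n, f n = A := by
    intro A hA
    exact ⟨e.symm ⟨A, hA⟩, by simp [f]⟩
  -- the sets to pick diagonal elements from
  set T : ℕ → ℕ → Set ℕ :=
    fun n prev => f n \ ((⋃ i ∈ Finset.range n, f i) ∪ Set.Iic prev) with hT
  have hTinf : ∀ n prev, (T n prev).Infinite := by
    intro n prev
    have h1 : (f n ∩ ((⋃ i ∈ Finset.range n, f i) ∪ Set.Iic prev)).Finite := by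
      rw [Set.inter_union_distrib_left]
      refine Set.Finite.union ?_ ((Set.finite_Iic prev).inter_of_right _)
      rw [Set.inter_iUnion₂]
      refine Set.Finite.biUnion (Finset.range n).finite_toSet (fun i hi => ?_)
      have hne : f n ≠ f i := by
        intro h
        have := hfinj h
        simp only [Finset.coe_range, Set.mem_Iio] at hi
        omega
      exact hMAD.2 (hfmem n) (hfmem i) hne
    have h2 : (f n).Infinite := hMAD.1 _ (hfmem n)
    have := h2.diff h1
    refine this.mono ?_
    intro x hx
    refine ⟨hx.1, ?_⟩
    intro hmem
    exact hx.2 ⟨hx.1, hmem⟩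
  -- diagonal sequence
  let d : ℕ → ℕ := fun n => Nat.rec (sInf (T 0 0)) (fun n dn => sInf (T (n+1) dn)) n
  have hd0 : d 0 ∈ T 0 0 := Nat.sInf_mem (hTinf 0 0).nonempty
  have hdsucc : ∀ n, d (n+1) ∈ T (n+1) (d n) := fun n => Nat.sInf_mem (hTinf (n+1) (d n)).nonempty
  have hdmem : ∀ n, d n ∈ f n := by
    intro n
    cases n with
    | zero => exact hd0.1
    | succ m => exact (hdsucc m).1
  have hdmono : StrictMono d := by
    apply strictMono_nat_of_lt_succ
    intro n
    have := (hdsucc n).2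
    simp only [Set.mem_union, Set.mem_Iic, not_or, not_le] at this
    exact this.2
  have hdnot : ∀ m n, n < m → d m ∉ f n := by
    intro m n hnm hdm
    cases m with
    | zero => omega
    | succ k =>
      have := (hdsucc k).2
      simp only [Set.mem_union, not_or] at this
      exact this.1 (Set.mem_iUnion₂.2 ⟨n, Finset.mem_range.2 hnm, hdm⟩)
  set D : Set ℕ := Set.range d with hD
  have hDinf : D.Infinite := Set.infinite_range_of_injective hdmono.injective
  obtain ⟨A, hA, hAD⟩ := hcatch D hDinf
  obtain ⟨m, rfl⟩ := hfsurj A hA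
  have : f m ∩ D ⊆ d '' (Set.Iic m) := by
    rintro x ⟨hxf, j, rfl⟩
    refine ⟨j, ?_, rfl⟩
    by_contra hj
    simp only [Set.mem_Iic, not_le] at hj
    exact hdnot j m hj hxf
  exact hAD (((Set.finite_Iic m).image d).subset this)



variable (C : Set (Set ℕ))

/-- Subtype of members of the family. -/
abbrev Mem := {A : Set ℕ // A ∈ C}

/-- Index type for the free abelian group. -/
abbrev Idx := ℕ ⊕ Mem C

/-- The free abelian group. -/
abbrev FA := Idx C →₀ ℤ

/-- position of `k` inside `A` (number of elements of `A` that are `≤ k`). -/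
noncomputable def pos (A : Set ℕ) (k : ℕ) : ℕ := (A ∩ Set.Iic k).ncard

lemma pos_le (A : Set ℕ) (k : ℕ) : pos A k ≤ k + 1 := by
  have h1 : (A ∩ Set.Iic k).ncard ≤ (Set.Iic k).ncard :=
    Set.ncard_le_ncard Set.inter_subset_right (Set.finite_Iic k)
  have h2 : (Set.Iic k).ncard = k + 1 := by
    rw [← Finset.coe_Iic, Set.ncard_coe_finset, Nat.card_Iic]
  rw [pos]; omega

lemma pos_small_finite (A : Set ℕ) (n : ℕ) : {k ∈ A | pos A k < n}.Finite := by
  by_contra h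
  have hinf : {k ∈ A | pos A k < n}.Infinite := h
  obtain ⟨S, hS, hcard⟩ := hinf.exists_subset_card_eq (n + 1)
  have hne : S.Nonempty := by
    rw [← Finset.card_pos, hcard]; omega
  set m := S.max' hne with hm
  have hmT : m ∈ {k ∈ A | pos A k < n} := hS (S.max'_mem hne)
  have hsub : ↑S ⊆ A ∩ Set.Iic m := by
    intro x hx
    exact ⟨(hS hx).1, S.le_max' x hx⟩
  have : n + 1 ≤ pos A m := by
    calc n + 1 = S.card := hcard.symm
    _ = (↑S : Set ℕ).ncard := (Set.ncard_coe_finset S).symm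
    _ ≤ (A ∩ Set.Iic m).ncard := Set.ncard_le_ncard hsub ((Set.finite_Iic m).inter_of_right A)
  have := hmT.2
  rw [pos] at *
  omega

variable {C}

/-- the generator points. -/
noncomputable def ypt (k : ℕ) : FA C := Finsupp.single (Sum.inl k) 1

noncomputable def zpt (A : Mem C) : FA C := Finsupp.single (Sum.inr A) 1

/-- basic edge element. -/
noncomputable def edge (k : ℕ) (A : Mem C) : FA C := ypt k - zpt A

/-- generating set of a basic neighbourhood of `0`. -/
def Gen (n : ℕ) (χ : Mem C → Set ℕ) : Set (FA C) :=
  {g | ∃ (k : ℕ) (A : Mem C), k ∈ A.1 ∧ n ≤ pos A.1 k ∧ k ∉ χ A ∧ g = edge k A}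

/-- admissible avoidance functions. -/
def OKc (χ : Mem C → Set ℕ) : Prop := ∀ A : Mem C, (A.1 ∩ χ A).Finite

lemma OKc_bot : OKc (fun _ : Mem C => (∅ : Set ℕ)) := by
  intro A; simp

lemma OKc_union {χ χ' : Mem C → Set ℕ} (h : OKc χ) (h' : OKc χ') :
    OKc (fun A => χ A ∪ χ' A) := by
  intro A
  rw [Set.inter_union_distrib_left]
  exact (h A).union (h' A)

/-- basic neighbourhood submonoid. -/
noncomputable def BS (n : ℕ) (χ : Mem C → Set ℕ) : AddSubmonoid (FA C) :=
  AddSubmonoid.closure (Gen n χ)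

lemma Gen_mono {n n' : ℕ} {χ χ' : Mem C → Set ℕ} (hn : n ≤ n')
    (hχ : ∀ A, χ A ⊆ χ' A) : Gen (C := C) n' χ' ⊆ Gen n χ := by
  rintro g ⟨k, A, hk, hpos, hχ', rfl⟩
  exact ⟨k, A, hk, le_trans hn hpos, fun hmem => hχ' (hχ A hmem), rfl⟩

lemma BS_mono {n n' : ℕ} {χ χ' : Mem C → Set ℕ} (hn : n ≤ n')
    (hχ : ∀ A, χ A ⊆ χ' A) : BS (C := C) n' χ' ≤ BS n χ :=
  AddSubmonoid.closure_mono (Gen_mono hn hχ)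

/-- The paratopological group topology. -/
noncomputable def topn : TopologicalSpace (FA C) where
  IsOpen O := ∀ x ∈ O, ∃ (n : ℕ) (χ : Mem C → Set ℕ), OKc χ ∧
      ∀ g : FA C, g - x ∈ BS n χ → g ∈ O
  isOpen_univ := fun x _ => ⟨0, fun _ => ∅, OKc_bot, fun _ _ => trivial⟩
  isOpen_inter := by
    intro s t hs ht x hx
    obtain ⟨n1, χ1, hok1, h1⟩ := hs x hx.1
    obtain ⟨n2, χ2, hok2, h2⟩ := ht x hx.2
    refine ⟨max n1 n2, fun A => χ1 A ∪ χ2 A, OKc_union hok1 hok2, fun g hg => ?_⟩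
    constructor
    · exact h1 g (BS_mono (le_max_left _ _) (fun A => Set.subset_union_left) hg)
    · exact h2 g (BS_mono (le_max_right _ _) (fun A => Set.subset_union_right) hg)
  isOpen_sUnion := by
    intro s hs x hx
    obtain ⟨t, hts, hxt⟩ := hx
    obtain ⟨n, χ, hok, h⟩ := hs t hts x hxt
    exact ⟨n, χ, hok, fun g hg => ⟨t, hts, h g hg⟩⟩

lemma isOpen_topn_iff {O : Set (FA C)} :
    IsOpen[topn] O ↔ ∀ x ∈ O, ∃ (n : ℕ) (χ : Mem C → Set ℕ), OKc χ ∧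
      ∀ g : FA C, g - x ∈ BS n χ → g ∈ O := Iff.rfl

/-- translate of a basic neighbourhood. -/
def trans (x : FA C) (n : ℕ) (χ : Mem C → Set ℕ) : Set (FA C) :=
  {g | g - x ∈ BS n χ}

lemma mem_trans_self (x : FA C) (n : ℕ) (χ : Mem C → Set ℕ) : x ∈ trans x n χ := by
  simp [trans, AddSubmonoid.zero_mem]

lemma isOpen_trans (x : FA C) (n : ℕ) (χ : Mem C → Set ℕ) (hχ : OKc χ) :
    IsOpen[topn] (trans x n χ) := by
  intro p hp
  refine ⟨n, χ, hχ, fun g hg => ?_⟩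
  have : g - x = (g - p) + (p - x) := by abel
  rw [trans, Set.mem_setOf_eq, this]
  exact (BS n χ).add_mem hg hp



noncomputable def maskFun (P : Idx C → Prop) : Idx C → ℤ → ℤ := fun i c => if P i then c else 0

lemma maskFun_zero (P : Idx C → Prop) (i : Idx C) : maskFun P i 0 = 0 := by
  unfold maskFun; split <;> rfl

lemma maskFun_add (P : Idx C → Prop) (i : Idx C) (b₁ b₂ : ℤ) :
    maskFun P i (b₁ + b₂) = maskFun P i b₁ + maskFun P i b₂ := by
  unfold maskFun; split <;> simp

noncomputable def maskHom (P : Idx C → Prop) : FA C →+ ℤ where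
  toFun x := x.sum (maskFun P)
  map_zero' := Finsupp.sum_zero_index
  map_add' f g := Finsupp.sum_add_index' (maskFun_zero P) (maskFun_add P)

lemma maskHom_apply (P : Idx C → Prop) (x : FA C) :
    maskHom P x = x.sum (maskFun P) := rfl

lemma maskHom_single (P : Idx C → Prop) (i : Idx C) (c : ℤ) :
    maskHom P (Finsupp.single i c) = if P i then c else 0 := by
  rw [maskHom_apply, Finsupp.sum_single_index (maskFun_zero P i)]
  rfl

lemma maskHom_eq_zero_of_coords (P : Idx C → Prop) (g : FA C)
    (h : ∀ i, P i → g i = 0) : maskHom P g = 0 := by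
  rw [maskHom_apply, Finsupp.sum]
  refine Finset.sum_eq_zero fun i hi => ?_
  unfold maskFun
  by_cases hP : P i
  · rw [Finsupp.mem_support_iff] at hi
    exact absurd (h i hP) hi
  · simp [hP]


-- evaluation computations for edges
section edges
variable {C : Set (Set ℕ)}

lemma edge_apply_inl (k : ℕ) (A : Mem C) (j : ℕ) :
    edge k A (Sum.inl j) = if k = j then 1 else 0 := by
  simp [edge, ypt, zpt, Finsupp.single_apply]

lemma edge_apply_inr (k : ℕ) (A B : Mem C) :
    edge k A (Sum.inr B) = if A = B then -1 else 0 := by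
  simp [edge, ypt, zpt, Finsupp.single_apply]
  split <;> simp

lemma maskHom_edge (P : Idx C → Prop) (k : ℕ) (A : Mem C) :
    maskHom P (edge k A) =
      (if P (Sum.inl k) then 1 else 0) - (if P (Sum.inr A) then 1 else 0) := by
  rw [edge, map_sub]
  unfold ypt zpt
  rw [maskHom_single, maskHom_single]

-- vanishing of the evaluation functional in case A
lemma vanish_caseA (ks : ℕ) :
    ∀ b ∈ BS (C := C) (ks + 2) (fun _ => ∅),
      Finsupp.applyAddHom (Sum.inl ks : Idx C) b = 0 := by
  intro b hb
  induction hb using AddSubmonoid.closure_induction with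
  | mem x hx =>
    obtain ⟨k, A, hk, hpos, _, rfl⟩ := hx
    have hkne : k ≠ ks := by
      have := pos_le A.1 k
      intro h; subst h; omega
    simp only [Finsupp.applyAddHom_apply]
    rw [edge_apply_inl]
    simp [hkne]
  | zero => simp
  | add x y hx hy px py => rw [map_add, px, py, add_zero]

-- the functional for case B
noncomputable def phiB (As : Mem C) : FA C →+ ℤ :=
  Finsupp.applyAddHom (Sum.inr As : Idx C) +
    maskHom (fun i => ∃ k : ℕ, i = Sum.inl k ∧ k ∈ As.1)

noncomputable def chiB (As : Mem C) : Mem C → Set ℕ :=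
  fun A => if A = As then (∅ : Set ℕ) else As.1

lemma OKc_chiB (hpw : ∀ A B : Mem C, A ≠ B → (A.1 ∩ B.1).Finite) (As : Mem C) :
    OKc (chiB As) := by
  intro A
  by_cases h : A = As
  · simp [chiB, h]
  · simpa [chiB, h] using hpw A As h

lemma vanish_caseB (As : Mem C) :
    ∀ b ∈ BS (C := C) 0 (chiB As), phiB As b = 0 := by
  intro b hb
  induction hb using AddSubmonoid.closure_induction with
  | mem x hx =>
    obtain ⟨k, A, hk, _, hχ, rfl⟩ := hx
    simp only [phiB, AddMonoidHom.add_apply, Finsupp.applyAddHom_apply]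
    rw [maskHom_edge, edge_apply_inr]
    by_cases hA : A = As
    · subst hA
      have : k ∈ A.1 := hk
      simp [this]
    · have hknotin : k ∉ As.1 := by
        intro hkAs
        apply hχ
        simp [chiB, hA, hkAs]
      have : ¬ ∃ k' : ℕ, (Sum.inl k : Idx C) = Sum.inl k' ∧ k' ∈ As.1 := by
        rintro ⟨k', hk', hmem⟩
        cases hk'
        exact hknotin hmem
      have h2 : ¬ ∃ k' : ℕ, (Sum.inr A : Idx C) = Sum.inl k' ∧ k' ∈ As.1 := by
        rintro ⟨k', hk', -⟩
        cases hk'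
      simpa [hA, this, h2] using hknotin
  | zero => simp
  | add x y hx hy px py => rw [map_add, px, py, add_zero]

end edges

section topfacts
variable {C : Set (Set ℕ)}

/-- T2 property. -/
theorem t2_topn (hpw : ∀ A B : Mem C, A ≠ B → (A.1 ∩ B.1).Finite) :
    @T2Space (FA C) topn := by
  letI : TopologicalSpace (FA C) := topn
  refine ⟨fun x y hxy => ?_⟩
  by_cases hinl : ∀ k : ℕ, x (Sum.inl k) = y (Sum.inl k)
  · -- find an inr coordinate where they differ
    have hA : ∃ As : Mem C, x (Sum.inr As) ≠ y (Sum.inr As) := by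
      by_contra hno
      push_neg at hno
      apply hxy
      ext i
      cases i with
      | inl k => exact hinl k
      | inr A => exact hno A
    obtain ⟨As, hAs⟩ := hA
    refine ⟨trans x 0 (chiB As), trans y 0 (chiB As),
      isOpen_trans x 0 _ (OKc_chiB hpw As), isOpen_trans y 0 _ (OKc_chiB hpw As),
      mem_trans_self x 0 _, mem_trans_self y 0 _, ?_⟩
    rw [Set.disjoint_left]
    rintro p hp hq
    have h1 : phiB As (p - x) = 0 := vanish_caseB As _ hp
    have h2 : phiB As (p - y) = 0 := vanish_caseB As _ hq
    rw [map_sub, sub_eq_zero] at h1 h2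
    have hxyeq : phiB As x = phiB As y := h1 ▸ h2 ▸ rfl
    -- compute phiB x - phiB y
    have hsub : phiB As x - phiB As y = phiB As (x - y) := (map_sub _ _ _).symm
    have hmask : maskHom (fun i => ∃ k : ℕ, i = Sum.inl k ∧ k ∈ As.1) (x - y) = 0 := by
      apply maskHom_eq_zero_of_coords
      rintro i ⟨k, rfl, -⟩
      simp [Finsupp.sub_apply, hinl k]
    have : phiB As (x - y) = (x - y) (Sum.inr As) := by
      simp only [phiB, AddMonoidHom.add_apply, Finsupp.applyAddHom_apply, hmask, add_zero]
    rw [hxyeq, sub_self] at hsub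
    rw [← hsub] at this
    rw [Finsupp.sub_apply] at this
    exact hAs (by linarith [this.symm])
  · push_neg at hinl
    obtain ⟨ks, hks⟩ := hinl
    refine ⟨trans x (ks + 2) (fun _ => ∅), trans y (ks + 2) (fun _ => ∅),
      isOpen_trans x _ _ OKc_bot, isOpen_trans y _ _ OKc_bot,
      mem_trans_self x _ _, mem_trans_self y _ _, ?_⟩
    rw [Set.disjoint_left]
    rintro p hp hq
    have h1 : Finsupp.applyAddHom (Sum.inl ks : Idx C) (p - x) = 0 := vanish_caseA ks _ hp
    have h2 : Finsupp.applyAddHom (Sum.inl ks : Idx C) (p - y) = 0 := vanish_caseA ks _ hq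
    rw [map_sub, sub_eq_zero] at h1 h2
    simp only [Finsupp.applyAddHom_apply] at h1 h2
    exact hks (h1 ▸ h2 ▸ rfl)

/-- continuity of addition. -/
theorem contAdd_topn : @ContinuousAdd (FA C) topn _ := by
  letI : TopologicalSpace (FA C) := topn
  refine ⟨continuous_def.2 fun O hO => ?_⟩
  rw [isOpen_prod_iff]
  rintro a b hab
  obtain ⟨n, χ, hok, h⟩ := hO (a + b) hab
  refine ⟨trans a n χ, trans b n χ, isOpen_trans a n χ hok, isOpen_trans b n χ hok,
    mem_trans_self a n χ, mem_trans_self b n χ, ?_⟩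
  rintro ⟨p, q⟩ ⟨hp, hq⟩
  apply h
  have : p + q - (a + b) = (p - a) + (q - b) := by abel
  rw [this]
  exact (BS n χ).add_mem hp hq

/-- every singleton is Gδ. -/
theorem gdelta_topn (x : FA C) : @IsGδ (FA C) topn {x} := by
  letI : TopologicalSpace (FA C) := topn
  have key : ∀ n : ℕ, ∀ b ∈ BS (C := C) n (fun _ => ∅),
      (∀ k : ℕ, 0 ≤ b (Sum.inl k)) ∧ (∀ k : ℕ, b (Sum.inl k) ≠ 0 → n ≤ k + 1) ∧
      0 ≤ maskHom (fun i => ∃ k : ℕ, i = Sum.inl k) b ∧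
      (maskHom (fun i => ∃ k : ℕ, i = Sum.inl k) b = 0 → b = 0) := by
    intro n b hb
    induction hb using AddSubmonoid.closure_induction with
    | mem g hg =>
      obtain ⟨k, A, hk, hpos, -, rfl⟩ := hg
      have hmask : maskHom (fun i : Idx C => ∃ k' : ℕ, i = Sum.inl k') (edge k A) = 1 := by
        rw [maskHom_edge]
        have h1 : ∃ k' : ℕ, (Sum.inl k : Idx C) = Sum.inl k' := ⟨k, rfl⟩
        have h2 : ¬ ∃ k' : ℕ, (Sum.inr A : Idx C) = Sum.inl k' := by
          rintro ⟨k', hk'⟩; cases hk'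
        simp [h1, h2]
      refine ⟨fun j => ?_, fun j hj => ?_, ?_, ?_⟩
      · rw [edge_apply_inl]; split <;> simp
      · rw [edge_apply_inl] at hj
        have : k = j := by by_contra hne; simp [hne] at hj
        subst this
        have := pos_le A.1 k
        omega
      · rw [hmask]; norm_num
      · rw [hmask]; intro h; exact absurd h one_ne_zero
    | zero =>
      refine ⟨fun k => by simp, fun k h => absurd rfl h, by simp, fun _ => rfl⟩
    | add p q hp hq ihp ihq =>
      obtain ⟨p1, p2, p3, p4⟩ := ihp
      obtain ⟨q1, q2, q3, q4⟩ := ihq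
      refine ⟨fun k => ?_, fun k h => ?_, ?_, ?_⟩
      · rw [Finsupp.add_apply]; have := p1 k; have := q1 k; omega
      · rw [Finsupp.add_apply] at h
        by_cases hp0 : p (Sum.inl k) ≠ 0
        · exact p2 k hp0
        · push_neg at hp0
          refine q2 k ?_
          intro hq0
          rw [hp0, hq0] at h; exact h rfl
      · rw [map_add]; omega
      · rw [map_add]
        intro h
        have hpz : maskHom (fun i : Idx C => ∃ k : ℕ, i = Sum.inl k) p = 0 := by omega
        have hqz : maskHom (fun i : Idx C => ∃ k : ℕ, i = Sum.inl k) q = 0 := by omega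
        rw [p4 hpz, q4 hqz, add_zero]
  have heq : ({x} : Set (FA C)) = ⋂ n : ℕ, trans x n (fun _ => ∅) := by
    apply Set.eq_of_subset_of_subset
    · rintro p rfl
      exact Set.mem_iInter.2 fun n => mem_trans_self p n _
    · intro p hp
      rw [Set.mem_iInter] at hp
      set b := p - x with hbdef
      have hball : ∀ n, b ∈ BS (C := C) n (fun _ => ∅) := fun n => hp n
      have hb0 : b = 0 := by
        by_cases hco : ∀ k : ℕ, b (Sum.inl k) = 0
        · refine (key 0 b (hball 0)).2.2.2 ?_
          apply maskHom_eq_zero_of_coords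
          rintro i ⟨k, rfl⟩
          exact hco k
        · push_neg at hco
          obtain ⟨k, hk⟩ := hco
          have := (key (k + 2) b (hball (k + 2))).2.1 k hk
          omega
      have : p - x = 0 := hb0
      have : p = x := by
        have := sub_eq_zero.1 this
        exact this
      simp [this]
  rw [heq]
  refine IsGδ.iInter_of_isOpen fun n => isOpen_trans x n _ OKc_bot

/-- convergence of the A-sequences. -/
theorem conv_topn (A : Mem C) {O : Set (FA C)} (hO : IsOpen[topn] O) (hz : zpt A ∈ O) :
    {k ∈ A.1 | ypt k ∉ O}.Finite := by
  obtain ⟨n, χ, hok, h⟩ := hO (zpt A) hz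
  have hsub : {k ∈ A.1 | ypt (C := C) k ∉ O} ⊆
      {k ∈ A.1 | pos A.1 k < n} ∪ (A.1 ∩ χ A) := by
    rintro k ⟨hkA, hknot⟩
    by_contra hmem
    simp only [Set.mem_union, Set.mem_setOf_eq, Set.mem_inter_iff, not_or, not_and, not_lt] at hmem
    apply hknot
    apply h
    have hedge : ypt (C := C) k - zpt A = edge k A := rfl
    rw [hedge]
    exact AddSubmonoid.subset_closure ⟨k, A, hkA, hmem.1 hkA, fun hc => hmem.2 hkA hc, rfl⟩
  exact ((pos_small_finite A.1 n).union (hok A)).subset hsub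

end topfacts

section metricpart

/-- In a metric space, a separable set all of whose points are isolated (within the set)
is countable. -/
lemma countable_of_isolated {X : Type} [MetricSpace X] {S : Set X}
    (hsep : TopologicalSpace.IsSeparable S)
    (hiso : ∀ p ∈ S, ∃ ε > 0, ∀ q ∈ S, dist p q < ε → q = p) : S.Countable := by
  obtain ⟨Cd, hCdc, hsub⟩ := hsep
  choose! ε hε0 hεiso using hiso
  have hc : ∀ (p : X), p ∈ S → ∃ c ∈ Cd, dist p c < ε p / 4 := by
    intro p hp
    have hpc : p ∈ closure Cd := hsub hp
    rw [Metric.mem_closure_iff] at hpc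
    exact hpc _ (by have := hε0 p hp; positivity)
  choose! c hcC hcd using hc
  have hr : ∀ (p : X), p ∈ S → ∃ r : ℚ, dist p (c p) < (r : ℝ) ∧ (r : ℝ) < ε p / 4 :=
    fun p hp => exists_rat_btwn (hcd p hp)
  choose! r hr1 hr2 using hr
  haveI : Countable ↥Cd := hCdc.to_subtype
  let F : ↥S → ↥Cd × ℚ := fun p => (⟨c p.1, hcC p.1 p.2⟩, r p.1)
  have hFinj : Function.Injective F := by
    rintro ⟨p, hp⟩ ⟨q, hq⟩ hpq
    simp only [F, Prod.mk.injEq, Subtype.mk.injEq] at hpq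
    obtain ⟨h1, h2⟩ := hpq
    have hd : dist p q < ε p := by
      have hq1 : dist q (c q) < (r q : ℝ) := hr1 q hq
      have hp1 : dist p (c p) < (r p : ℝ) := hr1 p hp
      have hp2 : (r p : ℝ) < ε p / 4 := hr2 p hp
      have hq2 : (r q : ℝ) < ε q / 4 := hr2 q hq
      have : dist p q ≤ dist p (c p) + dist q (c q) := by
        rw [dist_comm q (c q), h1]
        exact dist_triangle p (c q) q
      rw [h2] at hp1
      have hεq : 0 < ε q := hε0 q hq
      -- use: r q = r p (h2), and r p < ε p / 4
      rw [← h2] at hq1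
      have := hε0 p hp
      have h2' : ((r p : ℚ) : ℝ) = ((r q : ℚ) : ℝ) := by exact_mod_cast congrArg (fun x : ℚ => (x : ℝ)) h2
      linarith
    have := hεiso p hp q hq hd
    exact Subtype.ext this.symm
  haveI := hFinj.countable
  exact Set.countable_coe_iff.1 ‹Countable ↥S›

end metricpart

section mainthm
variable {C : Set (Set ℕ)}

theorem not_submetrizable
    (hinfm : ∀ A ∈ C, A.Infinite)
    (hpw : ∀ A B : Mem C, A ≠ B → (A.1 ∩ B.1).Finite)
    (hcatch : ∀ D : Set ℕ, D.Infinite → ∃ A ∈ C, (A ∩ D).Infinite)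
    (hunc : ¬ C.Countable) :
    ¬ ∃ t' : TopologicalSpace (FA C), topn ≤ t' ∧
        @TopologicalSpace.MetrizableSpace (FA C) t' := by
  rintro ⟨t', hle, hmet⟩
  obtain ⟨m, hm⟩ : ∃ m : MetricSpace (FA C), m.toUniformSpace.toTopologicalSpace = t' :=
    ⟨@TopologicalSpace.metrizableSpaceMetric _ t' hmet, rfl⟩
  subst hm
  letI : MetricSpace (FA C) := m
  -- bridge: metric-open sets are topn-open
  have hopen : ∀ s : Set (FA C), IsOpen s → IsOpen[topn] s := by
    intro s hs
    exact IsOpen.mono hs hle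
  -- metric convergence of the tails of any A
  have convM : ∀ (A : Mem C) (ε : ℝ), 0 < ε →
      {k ∈ A.1 | ¬ dist (ypt (C := C) k) (zpt A) < ε}.Finite := by
    intro A ε hε
    have hball : IsOpen[topn] (Metric.ball (zpt (C := C) A) ε) := hopen _ Metric.isOpen_ball
    have hmem : zpt (C := C) A ∈ Metric.ball (zpt A) ε := Metric.mem_ball_self hε
    refine (conv_topn A hball hmem).subset ?_
    rintro k ⟨hkA, hknot⟩
    refine ⟨hkA, fun hmem' => hknot ?_⟩
    rwa [Metric.mem_ball] at hmem'
  -- the z points are in the closure of the y points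
  have hzcl : ∀ A : Mem C, zpt (C := C) A ∈ closure (Set.range (ypt (C := C))) := by
    intro A
    rw [Metric.mem_closure_iff]
    intro ε hε
    have hfin := convM A ε hε
    have hAinf : A.1.Infinite := hinfm A.1 A.2
    obtain ⟨k, hk⟩ := (hAinf.diff hfin).nonempty
    refine ⟨ypt k, ⟨k, rfl⟩, ?_⟩
    have hk2 := hk.2
    simp only [Set.mem_setOf_eq, not_and, not_not] at hk2
    rw [dist_comm]
    exact hk2 hk.1
  -- injectivity of z
  have hzinj : Function.Injective (zpt (C := C)) := by
    intro A B h
    unfold zpt at h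
    rcases (Finsupp.single_eq_single_iff _ _ _ _).1 h with ⟨h1, -⟩ | ⟨h1, -⟩
    · exact Sum.inr_injective h1
    · exact absurd h1 one_ne_zero
  -- Z is uncountable
  set Z : Set (FA C) := Set.range (zpt (C := C)) with hZ
  have hZunc : ¬ Z.Countable := by
    intro hZc
    apply hunc
    haveI : Countable ↥Z := hZc.to_subtype
    have : Function.Injective (fun A : Mem C => (⟨zpt A, ⟨A, rfl⟩⟩ : ↥Z)) := by
      intro A B h
      exact hzinj (congrArg Subtype.val h)
    haveI : Countable (Mem C) := this.countable
    exact Set.countable_coe_iff.1 ‹Countable (Mem C)›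
  -- Z is separable
  have hZsep : TopologicalSpace.IsSeparable Z := by
    have h1 : TopologicalSpace.IsSeparable (closure (Set.range (ypt (C := C)))) :=
      (Set.countable_range _).isSeparable.closure
    refine h1.mono ?_
    rintro p ⟨A, rfl⟩
    exact hzcl A
  -- get a non-isolated point of Z
  have hiso : ¬ ∀ p ∈ Z, ∃ ε > 0, ∀ q ∈ Z, dist p q < ε → q = p := by
    intro h
    exact hZunc (countable_of_isolated hZsep h)
  push_neg at hiso
  obtain ⟨w, hwZ, hwacc⟩ := hiso
  obtain ⟨Astar, hAstar⟩ := hwZ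
  -- the approximating sequence
  have hseq : ∀ i : ℕ, ∃ A : Mem C, zpt (C := C) A ≠ zpt Astar ∧
      dist (zpt A) (zpt Astar) < 1 / (i + 1) := by
    intro i
    obtain ⟨q, hqZ, hqd, hqne⟩ := hwacc (1 / (i + 1)) (by positivity)
    obtain ⟨A, rfl⟩ := hqZ
    rw [← hAstar] at hqd hqne
    exact ⟨A, hqne, by rwa [dist_comm]⟩
  choose Aseq hAne hAdist using hseq
  -- the two rounds
  have round : ∀ E : Set ℕ, (∀ i : ℕ, ((Aseq i).1 ∩ E).Finite) →
      ∃ B : Mem C, zpt (C := C) B = zpt Astar ∧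
        ∃ D : Set ℕ, D ∩ E = ∅ ∧ (B.1 ∩ D).Infinite := by
    intro E hE
    set ks : ℕ → Set ℕ := fun i =>
      {k ∈ (Aseq i).1 | dist (ypt (C := C) k) (zpt (Aseq i)) < 1 / (i + 1) ∧ k ∉ E} with hks
    have hksinf : ∀ i, (ks i).Infinite := by
      intro i
      have h1 := convM (Aseq i) (1 / (i + 1)) (by positivity)
      have hAinf : (Aseq i).1.Infinite := hinfm _ (Aseq i).2
      refine (hAinf.diff (h1.union (hE i))).mono ?_
      rintro k hk
      obtain ⟨hkA, hknot⟩ := hk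
      have hg1 : dist (ypt (C := C) k) (zpt (Aseq i)) < 1 / (i + 1) := by
        by_contra hcon
        exact hknot (Set.mem_union_left _ ⟨hkA, hcon⟩)
      have hg2 : k ∉ E := fun hkE => hknot (Set.mem_union_right _ ⟨hkA, hkE⟩)
      simp only [hks, Set.mem_setOf_eq]
      exact ⟨hkA, hg1, hg2⟩
    -- strictly increasing selection
    let kf : ℕ → ℕ := fun n =>
      Nat.rec (sInf (ks 0)) (fun i prev => sInf (ks (i + 1) \ Set.Iic prev)) n
    have hkf0 : kf 0 ∈ ks 0 := Nat.sInf_mem (hksinf 0).nonempty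
    have hkfs : ∀ i, kf (i + 1) ∈ ks (i + 1) \ Set.Iic (kf i) := fun i =>
      Nat.sInf_mem ((hksinf (i + 1)).diff (Set.finite_Iic _)).nonempty
    have hkmem : ∀ i, kf i ∈ ks i := by
      intro i
      cases i with
      | zero => exact hkf0
      | succ j => exact (hkfs j).1
    have hkmono : StrictMono kf := by
      apply strictMono_nat_of_lt_succ
      intro i
      have := (hkfs i).2
      simp only [Set.mem_Iic, not_le] at this
      exact this
    set D : Set ℕ := Set.range kf with hD
    have hDE : D ∩ E = ∅ := by
      ext x
      simp only [Set.mem_inter_iff, Set.mem_empty_iff_false, iff_false, not_and]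
      rintro ⟨i, rfl⟩
      exact (hkmem i).2.2
    have hDinf : D.Infinite := Set.infinite_range_of_injective hkmono.injective
    obtain ⟨B0, hB0C, hB0D⟩ := hcatch D hDinf
    set B : Mem C := ⟨B0, hB0C⟩ with hB
    refine ⟨B, ?_, D, hDE, hB0D⟩
    have hdz : ∀ ε : ℝ, 0 < ε → dist (zpt (C := C) B) (zpt Astar) < ε := by
      intro ε hε
      obtain ⟨N, hN⟩ := exists_nat_gt (3 / ε)
      have hNpos : (0 : ℝ) < N + 1 := by positivity
      have hNe : 1 / ((N : ℝ) + 1) < ε / 3 := by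
        rw [div_lt_div_iff₀ hNpos (by norm_num : (0:ℝ) < 3)]
        rw [div_lt_iff₀ hε] at hN
        nlinarith
      -- infinitely many indices land in B0
      have hI : {i : ℕ | kf i ∈ B0}.Infinite := by
        intro hfin
        apply hB0D
        have : B0 ∩ D ⊆ kf '' {i : ℕ | kf i ∈ B0} := by
          rintro x ⟨hxB, i, rfl⟩
          exact ⟨i, hxB, rfl⟩
        exact (hfin.image kf).subset this
      -- indices whose image is a "bad" point of B are finitely many
      have hbadB := convM B (ε / 3) (by positivity)
      have hbadidx : {i : ℕ | kf i ∈ {k ∈ B.1 | ¬ dist (ypt (C := C) k) (zpt B) < ε / 3}}.Finite := by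
        have : {i : ℕ | kf i ∈ {k ∈ B.1 | ¬ dist (ypt (C := C) k) (zpt B) < ε / 3}} =
            kf ⁻¹' {k ∈ B.1 | ¬ dist (ypt (C := C) k) (zpt B) < ε / 3} := rfl
        rw [this]
        exact Set.Finite.preimage (Set.injOn_of_injective hkmono.injective) hbadB
      -- choose a suitable index
      have hlarge : ({i : ℕ | kf i ∈ B0} \ (hbadidx.toFinset ∪ Finset.range N : Finset ℕ)).Nonempty := by
        have : (((hbadidx.toFinset ∪ Finset.range N : Finset ℕ) : Set ℕ)).Finite :=
          (hbadidx.toFinset ∪ Finset.range N).finite_toSet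
        exact (hI.diff this).nonempty
      obtain ⟨i, hiB, hinot⟩ := hlarge
      simp only [Finset.coe_union, Set.Finite.coe_toFinset, Finset.coe_range, Set.mem_union,
        Set.mem_setOf_eq, Set.mem_Iio, not_or, not_and, not_not, not_lt] at hinot
      have hgood : dist (ypt (C := C) (kf i)) (zpt B) < ε / 3 := not_le.1 (fun hcon => (hinot.1 hiB) hcon)
      have hiN : N ≤ i := hinot.2
      -- distance estimates
      have h1 : dist (ypt (C := C) (kf i)) (zpt (Aseq i)) < 1 / (i + 1) := (hkmem i).2.1
      have h2 : dist (zpt (C := C) (Aseq i)) (zpt Astar) < 1 / (i + 1) := hAdist i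
      have hle1 : (1 : ℝ) / (i + 1) ≤ 1 / (N + 1) := by
        apply div_le_div_of_nonneg_left (by norm_num) hNpos
        have : (N : ℝ) ≤ i := by exact_mod_cast hiN
        linarith
      calc dist (zpt (C := C) B) (zpt Astar)
          ≤ dist (zpt (C := C) B) (ypt (kf i)) + dist (ypt (C := C) (kf i)) (zpt Astar) :=
            dist_triangle _ _ _
        _ ≤ dist (zpt (C := C) B) (ypt (kf i)) + (dist (ypt (C := C) (kf i)) (zpt (Aseq i)) +
              dist (zpt (C := C) (Aseq i)) (zpt Astar)) := by
            have := dist_triangle (ypt (C := C) (kf i)) (zpt (Aseq i)) (zpt Astar)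
            linarith
        _ < ε / 3 + (1 / (i + 1) + 1 / (i + 1)) := by
            rw [dist_comm (zpt (C := C) B)]
            linarith
        _ ≤ ε / 3 + (1 / (N + 1) + 1 / (N + 1)) := by linarith
        _ < ε / 3 + (ε / 3 + ε / 3) := by linarith
        _ = ε := by ring
    have hzero : dist (zpt (C := C) B) (zpt Astar) = 0 := by
      by_contra h
      have hpos : 0 < dist (zpt (C := C) B) (zpt Astar) :=
        lt_of_le_of_ne dist_nonneg (Ne.symm h)
      exact absurd (hdz _ hpos) (lt_irrefl _)
    exact dist_eq_zero.1 hzero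
  -- run the two rounds
  obtain ⟨B1, hB1, D1, -, -⟩ := round ∅ (fun i => by simp)
  have hE2 : ∀ i : ℕ, ((Aseq i).1 ∩ B1.1).Finite := by
    intro i
    refine hpw (Aseq i) B1 ?_
    intro h
    exact hAne i (by rw [h, hB1])
  obtain ⟨B2, hB2, D2, hD2, hBD2⟩ := round B1.1 hE2
  have hB12 : B2 = B1 := hzinj (hB2.trans hB1.symm)
  apply hBD2
  refine Set.Finite.subset Set.finite_empty ?_
  intro k hk
  rw [hB12] at hk
  rw [← hD2]
  exact ⟨hk.2, hk.1⟩

end mainthm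

end NSGW


open Topology

/-- A witness for the existence of a Hausdorff paratopological group
(a group with a topology making multiplication jointly continuous)
in which every singleton is a `Gδ`-set but which is not submetrizable
(there is no metrizable topology coarser than the given one). -/
structure NonSubmetrizableGdeltaWitness where
  G : Type
  [group : Group G]
  [top : TopologicalSpace G]
  hausdorff : T2Space G
  paratopological : ContinuousMul G
  singletons_Gdelta : ∀ x : G, IsGδ ({x} : Set G)
  not_submetrizable :
    ¬ ∃ t' : TopologicalSpace G, top ≤ t' ∧ @TopologicalSpace.MetrizableSpace G t'

/-- There exists a Hausdorff paratopological group `G` such that every singleton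
of `G` is a `Gδ`-set, but `G` is not submetrizable. -/
theorem exists_hausdorff_paratopological_group_Gdelta_points_not_submetrizable :
    Nonempty NonSubmetrizableGdeltaWitness := by
  classical
  obtain ⟨C, hADF, hcatch, hunc⟩ := NSGW.exists_mad
  have hpw : ∀ A B : NSGW.Mem C, A ≠ B → (A.1 ∩ B.1).Finite := by
    intro A B hne
    exact hADF.2 A.2 B.2 (fun h => hne (Subtype.ext h))
  have hinfm : ∀ A ∈ C, A.Infinite := hADF.1
  letI tG : TopologicalSpace (Multiplicative (NSGW.FA C)) := NSGW.topn
  refine ⟨{ G := Multiplicative (NSGW.FA C)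
            group := inferInstance
            top := tG
            hausdorff := NSGW.t2_topn hpw
            paratopological := ⟨(NSGW.contAdd_topn (C := C)).continuous_add⟩
            singletons_Gdelta := fun x => NSGW.gdelta_topn x
            not_submetrizable := NSGW.not_submetrizable hinfm hpw hcatch hunc }⟩
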